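/- arXiv:2205.08295 — 2 statements merged into one kernel-verified Lean document; each statement's English description precedes it below -/
import Mathlib

section
/- Consider the multi-user deterministic setup: integers d, n ≥ 1, a real λ > 0, real numbers l_{jk} (1 ≤ j,k ≤ n) with l_{kk} > 0 for all k; for each user k a finite index set T_k and, for each τ ∈ T_k, vectors b_{k,τ}, b̄_{k,τ} ∈ ℝ^d, reals ν_{k,τ}, η_{k,τ}, and a symmetric positive semidefinite matrix E_{k,τ} ∈ ℝ^{d×d}; and vectors μ_1,…,μ_n ∈ ℝ^d. Define X_{k,τ} = b_{k,τ} − b̄_{k,τ}, r_{k,τ} = ν_{k,τ} + b_{k,τ}ᵀ μ_k + η_{k,τ}, B_k = Σ_{τ∈T_k}(X_{k,τ} X_{k,τ}ᵀ + E_{k,τ}) + λ l_{kk} I_d, μ̄_k = B_k^{-1} Σ_{τ∈T_k} 2 X_{k,τ} r_{k,τ}, A_k = (Σ_{τ∈T_k}(X_{k,τ} X_{k,τ}ᵀ − E_{k,τ})) μ_k + Σ_{τ∈T_k} 2 X_{k,τ}(ν_{k,τ} + b̄_{k,τ}ᵀ μ_k). Fix a user j such that Σ_{k≠j} l_{jk}²/(l_{jj}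 l_{kk}) ≤ 1, and set μ̂_j = μ̄_j − λ B_j^{-1} Σ_{k≠j} l_{jk} μ̄_k and Γ_j = B_j + λ² Σ_{k≠j} l_{jk}² B_k^{-1}. Define C₁ = ‖λ Σ_{k=1}^n l_{jk} μ_k‖_{B_j^{-1}}, C₂ = ‖λ² Σ_{k≠j} l_{jk} l_{kk} B_k^{-1} μ_k‖_{B_j^{-1}}, C₃ = ‖Σ_{τ∈T_j} 2 X_{j,τ} η_{j,τ}‖_{B_j^{-1}}, C₄ = ‖λ Σ_{k≠j} l_{jk} B_k^{-1} Σ_{τ∈T_k} 2 X_{k,τ} η_{k,τ}‖_{B_j^{-1}}, C₅ = ‖A_j‖_{B_j^{-1}}, and C₆ = ‖λ Σ_{k≠j} l_{jk} B_k^{-1} A_k‖_{B_j^{-1}}. Then for every x ∈ ℝ^d, |xᵀ(μ̂_j − μ_j)| ≤ √2 · ‖x‖_{Γ_j^{-1}} · (C₁ + C₂ + C₃ + C₄ + C₅ + C₆). -/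
open Matrix Finset

section AuxLemmas

variable {d : ℕ}

lemma aux_dot_nonneg {P : Matrix (Fin d) (Fin d) ℝ} (hP : P.PosSemidef) (x : Fin d → ℝ) :
    0 ≤ x ⬝ᵥ P *ᵥ x := by
  simpa using hP.dotProduct_mulVec_nonneg x

lemma aux_cs {P : Matrix (Fin d) (Fin d) ℝ} (hP : P.PosSemidef) (x v : Fin d → ℝ) :
    (x ⬝ᵥ P *ᵥ v) ^ 2 ≤ (x ⬝ᵥ P *ᵥ x) * (v ⬝ᵥ P *ᵥ v) := by
  obtain ⟨S, rfl⟩ : ∃ S : Matrix (Fin d) (Fin d) ℝ, P = Sᴴ * S := by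
    open scoped MatrixOrder in
    exact CStarAlgebra.nonneg_iff_eq_star_mul_self.mp hP.nonneg
  rw [Matrix.conjTranspose_eq_transpose_of_trivial] at *
  have key : ∀ u w : Fin d → ℝ, u ⬝ᵥ (Sᵀ * S) *ᵥ w = (S *ᵥ u) ⬝ᵥ (S *ᵥ w) := by
    intro u w
    rw [← Matrix.mulVec_mulVec, Matrix.dotProduct_mulVec, Matrix.vecMul_transpose]
  rw [key, key, key]
  have := Finset.sum_mul_sq_le_sq_mul_sq Finset.univ (fun i => (S *ᵥ x) i) (fun i => (S *ᵥ v) i)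
  simpa [dotProduct, sq, mul_pow] using this

lemma aux_cs_abs {P : Matrix (Fin d) (Fin d) ℝ} (hP : P.PosSemidef) (x v : Fin d → ℝ) :
    |x ⬝ᵥ P *ᵥ v| ≤ Real.sqrt (x ⬝ᵥ P *ᵥ x) * Real.sqrt (v ⬝ᵥ P *ᵥ v) := by
  have h := Real.sqrt_le_sqrt (aux_cs hP x v)
  rwa [Real.sqrt_sq_eq_abs, Real.sqrt_mul (aux_dot_nonneg hP x)] at h

lemma aux_sym_dot {P : Matrix (Fin d) (Fin d) ℝ} (hP : P.IsHermitian) (u v : Fin d → ℝ) :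
    u ⬝ᵥ P *ᵥ v = v ⬝ᵥ P *ᵥ u := by
  have hPt : Pᵀ = P := by
    rw [Matrix.IsHermitian, Matrix.conjTranspose_eq_transpose_of_trivial] at hP
    exact hP
  rw [Matrix.dotProduct_mulVec]
  conv_lhs => rw [← hPt]
  rw [Matrix.vecMul_transpose]
  exact dotProduct_comm _ _

lemma aux_tri {P : Matrix (Fin d) (Fin d) ℝ} (hP : P.PosSemidef) (u v : Fin d → ℝ) :
    Real.sqrt ((u + v) ⬝ᵥ P *ᵥ (u + v)) ≤
      Real.sqrt (u ⬝ᵥ P *ᵥ u) + Real.sqrt (v ⬝ᵥ P *ᵥ v) := by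
  have h1 : (u + v) ⬝ᵥ P *ᵥ (u + v) ≤
      (Real.sqrt (u ⬝ᵥ P *ᵥ u) + Real.sqrt (v ⬝ᵥ P *ᵥ v)) ^ 2 := by
    have hexp : (u + v) ⬝ᵥ P *ᵥ (u + v) =
        u ⬝ᵥ P *ᵥ u + 2 * (u ⬝ᵥ P *ᵥ v) + v ⬝ᵥ P *ᵥ v := by
      rw [Matrix.mulVec_add, dotProduct_add, add_dotProduct,
        add_dotProduct, aux_sym_dot hP.1 v u]
      ring
    have hle : u ⬝ᵥ P *ᵥ v ≤ Real.sqrt (u ⬝ᵥ P *ᵥ u) * Real.sqrt (v ⬝ᵥ P *ᵥ v) :=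
      (le_abs_self _).trans (aux_cs_abs hP u v)
    have hsq : Real.sqrt (u ⬝ᵥ P *ᵥ u) ^ 2 = u ⬝ᵥ P *ᵥ u := Real.sq_sqrt (aux_dot_nonneg hP u)
    have hsq' : Real.sqrt (v ⬝ᵥ P *ᵥ v) ^ 2 = v ⬝ᵥ P *ᵥ v := Real.sq_sqrt (aux_dot_nonneg hP v)
    nlinarith [hsq, hsq', hle]
  calc Real.sqrt ((u + v) ⬝ᵥ P *ᵥ (u + v)) ≤
      Real.sqrt ((Real.sqrt (u ⬝ᵥ P *ᵥ u) + Real.sqrt (v ⬝ᵥ P *ᵥ v)) ^ 2) :=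
        Real.sqrt_le_sqrt h1
    _ = _ := Real.sqrt_sq (by positivity)

lemma aux_inv_mono {M N : Matrix (Fin d) (Fin d) ℝ} (hM : M.PosDef) (hN : N.PosDef)
    (h : ∀ z, z ⬝ᵥ M *ᵥ z ≤ z ⬝ᵥ N *ᵥ z) (x : Fin d → ℝ) :
    x ⬝ᵥ N⁻¹ *ᵥ x ≤ x ⬝ᵥ M⁻¹ *ᵥ x := by
  set y := N⁻¹ *ᵥ x with hy
  set w := M⁻¹ *ᵥ x with hw
  have hNy : N *ᵥ y = x := by
    rw [hy, Matrix.mulVec_mulVec, Matrix.mul_nonsing_inv _ (isUnit_iff_isUnit_det _ |>.1 hN.isUnit), Matrix.one_mulVec]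
  have hMw : M *ᵥ w = x := by
    rw [hw, Matrix.mulVec_mulVec, Matrix.mul_nonsing_inv _ (isUnit_iff_isUnit_det _ |>.1 hM.isUnit), Matrix.one_mulVec]
  have hxy : x ⬝ᵥ N⁻¹ *ᵥ x = x ⬝ᵥ y := rfl
  have hyNy : y ⬝ᵥ N *ᵥ y = x ⬝ᵥ y := by rw [hNy]; exact dotProduct_comm y x
  have hpos : 0 ≤ (y - w) ⬝ᵥ M *ᵥ (y - w) := aux_dot_nonneg hM.posSemidef _
  have hexp : (y - w) ⬝ᵥ M *ᵥ (y - w) =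
      y ⬝ᵥ M *ᵥ y - 2 * (x ⬝ᵥ y) + x ⬝ᵥ w := by
    rw [Matrix.mulVec_sub, dotProduct_sub, sub_dotProduct, sub_dotProduct,
      aux_sym_dot hM.1 w y, hMw]
    have h2 : x ⬝ᵥ y = y ⬝ᵥ x := dotProduct_comm x y
    have h3 : x ⬝ᵥ w = w ⬝ᵥ x := dotProduct_comm x w
    linarith
  have hMN := h y
  have hxw : x ⬝ᵥ M⁻¹ *ᵥ x = x ⬝ᵥ w := rfl
  rw [hxy, hxw]
  nlinarith [hpos, hexp, hMN, hyNy]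

lemma aux_vecMulVec_mulVec (x y z : Fin d → ℝ) :
    (vecMulVec x y) *ᵥ z = (y ⬝ᵥ z) • x := by
  ext i
  simp only [Matrix.mulVec, Matrix.vecMulVec_apply, dotProduct, Pi.smul_apply, smul_eq_mul]
  rw [Finset.sum_mul]
  exact Finset.sum_congr rfl fun j _ => by ring

lemma aux_vecMulVec_psd (x : Fin d → ℝ) : (vecMulVec x x).PosSemidef := by
  refine Matrix.PosSemidef.of_dotProduct_mulVec_nonneg ?_ ?_
  · ext i j
    simp [Matrix.conjTranspose_apply, Matrix.vecMulVec_apply, mul_comm]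
  · intro z
    rw [aux_vecMulVec_mulVec, dotProduct_smul]
    have : star z ⬝ᵥ x = x ⬝ᵥ z := by
      simp [dotProduct, mul_comm]
    rw [this, smul_eq_mul]
    exact mul_self_nonneg _

lemma aux_psd_smul {P : Matrix (Fin d) (Fin d) ℝ} (hP : P.PosSemidef) {c : ℝ} (hc : 0 ≤ c) :
    (c • P).PosSemidef := by
  refine Matrix.PosSemidef.of_dotProduct_mulVec_nonneg ?_ ?_
  · show (c • P)ᴴ = c • P
    rw [Matrix.conjTranspose_smul, star_trivial, hP.1.eq]
  · intro z
    rw [Matrix.smul_mulVec, dotProduct_smul]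
    exact smul_nonneg hc (hP.dotProduct_mulVec_nonneg z)

lemma aux_pd_smul_one {c : ℝ} (hc : 0 < c) :
    (c • (1 : Matrix (Fin d) (Fin d) ℝ)).PosDef := by
  refine Matrix.PosDef.of_dotProduct_mulVec_pos ?_ ?_
  · show (c • (1 : Matrix (Fin d) (Fin d) ℝ))ᴴ = c • 1
    rw [Matrix.conjTranspose_smul, star_trivial, Matrix.conjTranspose_one]
  · intro z hz
    rw [Matrix.smul_mulVec, Matrix.one_mulVec, dotProduct_smul, smul_eq_mul]
    have hz2 : 0 < star z ⬝ᵥ z := by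
      rcases lt_or_eq_of_le (dotProduct_star_self_nonneg z) with h | h
      · exact h
      · exact absurd ((dotProduct_star_self_eq_zero).mp h.symm) hz
    exact mul_pos hc hz2

lemma aux_psd_sum {ι : Type*} {s : Finset ι} {f : ι → Matrix (Fin d) (Fin d) ℝ}
    (h : ∀ i ∈ s, (f i).PosSemidef) : (∑ i ∈ s, f i).PosSemidef := by
  classical
  induction s using Finset.induction_on with
  | empty => simpa using Matrix.PosSemidef.zero
  | insert _ _ hnotmem ih =>
    rw [Finset.sum_insert hnotmem]
    exact (h _ (Finset.mem_insert_self _ _)).add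
      (ih fun i hi => h i (Finset.mem_insert_of_mem hi))

lemma aux_sum_mulVec {d : ℕ} {ι : Type*} (s : Finset ι) (f : ι → Matrix (Fin d) (Fin d) ℝ)
    (x : Fin d → ℝ) : (∑ i ∈ s, f i) *ᵥ x = ∑ i ∈ s, f i *ᵥ x := by
  ext i
  simp only [Matrix.mulVec, dotProduct, Matrix.sum_apply, Finset.sum_mul, Finset.sum_apply]
  exact Finset.sum_comm

lemma aux_dot_sum {d : ℕ} {ι : Type*} (s : Finset ι) (f : ι → Fin d → ℝ) (z : Fin d → ℝ) :
    z ⬝ᵥ ∑ i ∈ s, f i = ∑ i ∈ s, z ⬝ᵥ f i := by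
  simp only [dotProduct, Finset.sum_apply, Finset.mul_sum]
  exact Finset.sum_comm

end AuxLemmas

/-- the bound `|xᵀ(μ̂_j − μ_j)| ≤ √2 ‖x‖_{Γ_j⁻¹} (C₁ + ⋯ + C₆)`. -/
theorem stmt_8 (d n : ℕ) (hd : 1 ≤ d) (hn : 1 ≤ n) (lam : ℝ) (hlam : 0 < lam)
    (l : Fin n → Fin n → ℝ) (hl : ∀ k, 0 < l k k)
    {ι : Type*} (T : Fin n → Finset ι)
    (b bbar : Fin n → ι → Fin d → ℝ) (ν η : Fin n → ι → ℝ)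
    (E : Fin n → ι → Matrix (Fin d) (Fin d) ℝ) (hE : ∀ k τ, (E k τ).PosSemidef)
    (μ : Fin n → Fin d → ℝ)
    (X : Fin n → ι → Fin d → ℝ) (hX : ∀ k τ, X k τ = b k τ - bbar k τ)
    (r : Fin n → ι → ℝ) (hr : ∀ k τ, r k τ = ν k τ + b k τ ⬝ᵥ μ k + η k τ)
    (B : Fin n → Matrix (Fin d) (Fin d) ℝ)
    (hB : ∀ k, B k = ∑ τ ∈ T k, (vecMulVec (X k τ) (X k τ) + E k τ) +
      (lam * l k k) • (1 : Matrix (Fin d) (Fin d) ℝ))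
    (mubar : Fin n → Fin d → ℝ)
    (hmubar : ∀ k, mubar k = (B k)⁻¹.mulVec (∑ τ ∈ T k, (2 * r k τ) • X k τ))
    (A : Fin n → Fin d → ℝ)
    (hA : ∀ k, A k = (∑ τ ∈ T k, (vecMulVec (X k τ) (X k τ) - E k τ)).mulVec (μ k) +
      ∑ τ ∈ T k, (2 * (ν k τ + bbar k τ ⬝ᵥ μ k)) • X k τ)
    (j : Fin n)
    (hsum : ∑ k ∈ Finset.univ.erase j, (l j k) ^ 2 / (l j j * l k k) ≤ 1)
    (muhat : Fin d → ℝ)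
    (hmuhat : muhat = mubar j -
      lam • (B j)⁻¹.mulVec (∑ k ∈ Finset.univ.erase j, l j k • mubar k))
    (Γ : Matrix (Fin d) (Fin d) ℝ)
    (hΓ : Γ = B j + lam ^ 2 • ∑ k ∈ Finset.univ.erase j, (l j k) ^ 2 • (B k)⁻¹)
    (C₁ C₂ C₃ C₄ C₅ C₆ : ℝ)
    (hC₁ : C₁ = Real.sqrt ((lam • ∑ k : Fin n, l j k • μ k) ⬝ᵥ
      (B j)⁻¹.mulVec (lam • ∑ k : Fin n, l j k • μ k)))
    (hC₂ : C₂ = Real.sqrt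
      ((lam ^ 2 • ∑ k ∈ Finset.univ.erase j, (l j k * l k k) • (B k)⁻¹.mulVec (μ k)) ⬝ᵥ
        (B j)⁻¹.mulVec
          (lam ^ 2 • ∑ k ∈ Finset.univ.erase j, (l j k * l k k) • (B k)⁻¹.mulVec (μ k))))
    (hC₃ : C₃ = Real.sqrt ((∑ τ ∈ T j, (2 * η j τ) • X j τ) ⬝ᵥ
      (B j)⁻¹.mulVec (∑ τ ∈ T j, (2 * η j τ) • X j τ)))
    (hC₄ : C₄ = Real.sqrt
      ((lam • ∑ k ∈ Finset.univ.erase j,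
          l j k • (B k)⁻¹.mulVec (∑ τ ∈ T k, (2 * η k τ) • X k τ)) ⬝ᵥ
        (B j)⁻¹.mulVec (lam • ∑ k ∈ Finset.univ.erase j,
          l j k • (B k)⁻¹.mulVec (∑ τ ∈ T k, (2 * η k τ) • X k τ))))
    (hC₅ : C₅ = Real.sqrt (A j ⬝ᵥ (B j)⁻¹.mulVec (A j)))
    (hC₆ : C₆ = Real.sqrt
      ((lam • ∑ k ∈ Finset.univ.erase j, l j k • (B k)⁻¹.mulVec (A k)) ⬝ᵥ
        (B j)⁻¹.mulVec (lam • ∑ k ∈ Finset.univ.erase j, l j k • (B k)⁻¹.mulVec (A k))))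
    (x : Fin d → ℝ) :
    |x ⬝ᵥ (muhat - μ j)| ≤
      Real.sqrt 2 * Real.sqrt (x ⬝ᵥ Γ⁻¹.mulVec x) * (C₁ + C₂ + C₃ + C₄ + C₅ + C₆) := by
  classical
  have hBpsd_part : ∀ k, (∑ τ ∈ T k, (vecMulVec (X k τ) (X k τ) + E k τ)).PosSemidef :=
    fun k => aux_psd_sum fun τ _ => (aux_vecMulVec_psd _).add (hE k τ)
  have hBpd : ∀ k, (B k).PosDef := by
    intro k
    rw [hB k]
    exact Matrix.PosDef.posSemidef_add (hBpsd_part k) (aux_pd_smul_one (mul_pos hlam (hl k)))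
  have hBunit : ∀ k, IsUnit (B k).det := fun k =>
    (Matrix.isUnit_iff_isUnit_det _).1 (hBpd k).isUnit
  have hBinv : ∀ k, B k * (B k)⁻¹ = 1 := fun k => Matrix.mul_nonsing_inv _ (hBunit k)
  have hBinv' : ∀ k, (B k)⁻¹ * B k = 1 := fun k => Matrix.nonsing_inv_mul _ (hBunit k)
  set S : Fin n → Fin d → ℝ := fun k => ∑ τ ∈ T k, (2 * η k τ) • X k τ with hSdef
  have hb : ∀ k τ, b k τ ⬝ᵥ μ k = X k τ ⬝ᵥ μ k + bbar k τ ⬝ᵥ μ k := by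
    intro k τ
    rw [hX k τ, sub_dotProduct]
    ring
  have key : ∀ k, ∑ τ ∈ T k, (2 * r k τ) • X k τ
      = ∑ τ ∈ T k, ((vecMulVec (X k τ) (X k τ) + E k τ) *ᵥ μ k
          + ((vecMulVec (X k τ) (X k τ) - E k τ) *ᵥ μ k
          + ((2 * (ν k τ + bbar k τ ⬝ᵥ μ k)) • X k τ + (2 * η k τ) • X k τ))) := by
    refine fun k => Finset.sum_congr rfl fun τ _ => ?_
    rw [hr k τ, hb k τ, Matrix.add_mulVec, Matrix.sub_mulVec, aux_vecMulVec_mulVec]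
    module
  have key2 : ∀ k, ∑ τ ∈ T k, (2 * r k τ) • X k τ
      = A k + B k *ᵥ μ k - (lam * l k k) • μ k + S k := by
    intro k
    rw [key k, hA k, hB k, Matrix.add_mulVec, Matrix.smul_mulVec, Matrix.one_mulVec,
      aux_sum_mulVec, aux_sum_mulVec, Finset.sum_add_distrib, Finset.sum_add_distrib,
      Finset.sum_add_distrib]
    abel
  have hmubar' : ∀ k, mubar k
      = μ k + ((B k)⁻¹ *ᵥ A k + ((B k)⁻¹ *ᵥ S k - (lam * l k k) • ((B k)⁻¹ *ᵥ μ k))) := by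
    intro k
    rw [hmubar k, key2 k]
    simp only [Matrix.mulVec_add, Matrix.mulVec_sub, Matrix.mulVec_smul, Matrix.mulVec_mulVec,
      hBinv' k, Matrix.one_mulVec]
    abel
  set w₁ : Fin d → ℝ := lam • ∑ k : Fin n, l j k • μ k with hw₁
  set w₂ : Fin d → ℝ :=
    lam ^ 2 • ∑ k ∈ Finset.univ.erase j, (l j k * l k k) • (B k)⁻¹.mulVec (μ k) with hw₂
  set w₄ : Fin d → ℝ :=
    lam • ∑ k ∈ Finset.univ.erase j, l j k • (B k)⁻¹.mulVec (S k) with hw₄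
  set w₆ : Fin d → ℝ :=
    lam • ∑ k ∈ Finset.univ.erase j, l j k • (B k)⁻¹.mulVec (A k) with hw₆
  have hkey : muhat - μ j = (B j)⁻¹ *ᵥ (A j + S j - (lam * l j j) • μ j
      - lam • ∑ k ∈ Finset.univ.erase j, l j k • mubar k) := by
    rw [hmuhat, hmubar' j]
    simp only [Matrix.mulVec_sub, Matrix.mulVec_add, Matrix.mulVec_smul]
    abel
  have harg : A j + S j - (lam * l j j) • μ j
      - lam • ∑ k ∈ Finset.univ.erase j, l j k • mubar k
      = w₂ + S j + A j - (w₁ + w₄ + w₆) := by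
    have hterm : ∀ k ∈ Finset.univ.erase j, l j k • mubar k
        = l j k • μ k + (l j k • ((B k)⁻¹ *ᵥ A k) + (l j k • ((B k)⁻¹ *ᵥ S k)
          - l j k • ((lam * l k k) • ((B k)⁻¹ *ᵥ μ k)))) := by
      intro k _
      rw [hmubar' k]
      module
    rw [Finset.sum_congr rfl hterm, Finset.sum_add_distrib, Finset.sum_add_distrib,
      Finset.sum_sub_distrib, smul_add, smul_add, smul_sub]
    have hw1' : w₁ = (lam * l j j) • μ j + lam • ∑ k ∈ Finset.univ.erase j, l j k • μ k := by
      rw [hw₁, ← Finset.add_sum_erase _ _ (Finset.mem_univ j), smul_add, smul_smul]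
    have hw2' : lam • ∑ k ∈ Finset.univ.erase j,
        l j k • ((lam * l k k) • ((B k)⁻¹ *ᵥ μ k)) = w₂ := by
      rw [hw₂, Finset.smul_sum, Finset.smul_sum]
      refine Finset.sum_congr rfl fun k _ => ?_
      module
    rw [hw1', hw2']
    abel
  rw [harg] at hkey
  have hPpsd : ((B j)⁻¹).PosSemidef := (hBpd j).inv.posSemidef
  -- the six norms
  have hq3 : C₃ = Real.sqrt (S j ⬝ᵥ (B j)⁻¹ *ᵥ S j) := hC₃
  have hqneg : ∀ v : Fin d → ℝ,
      Real.sqrt ((-v) ⬝ᵥ (B j)⁻¹ *ᵥ (-v)) = Real.sqrt (v ⬝ᵥ (B j)⁻¹ *ᵥ v) := by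
    intro v
    rw [Matrix.mulVec_neg, neg_dotProduct, dotProduct_neg, neg_neg]
  set W : Fin d → ℝ := w₂ + S j + A j - (w₁ + w₄ + w₆) with hW
  have hWsplit : W = w₂ + (S j + (A j + (-w₁ + (-w₄ + -w₆)))) := by rw [hW]; abel
  have htriW : Real.sqrt (W ⬝ᵥ (B j)⁻¹ *ᵥ W) ≤ C₁ + C₂ + C₃ + C₄ + C₅ + C₆ := by
    rw [hWsplit]
    calc Real.sqrt ((w₂ + (S j + (A j + (-w₁ + (-w₄ + -w₆))))) ⬝ᵥ (B j)⁻¹ *ᵥ _)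
        ≤ Real.sqrt (w₂ ⬝ᵥ (B j)⁻¹ *ᵥ w₂)
          + Real.sqrt ((S j + (A j + (-w₁ + (-w₄ + -w₆)))) ⬝ᵥ (B j)⁻¹ *ᵥ
              (S j + (A j + (-w₁ + (-w₄ + -w₆))))) := aux_tri hPpsd _ _
      _ ≤ Real.sqrt (w₂ ⬝ᵥ (B j)⁻¹ *ᵥ w₂) + (Real.sqrt (S j ⬝ᵥ (B j)⁻¹ *ᵥ S j)
          + Real.sqrt ((A j + (-w₁ + (-w₄ + -w₆))) ⬝ᵥ (B j)⁻¹ *ᵥ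
              (A j + (-w₁ + (-w₄ + -w₆))))) := by
            gcongr
            exact aux_tri hPpsd _ _
      _ ≤ Real.sqrt (w₂ ⬝ᵥ (B j)⁻¹ *ᵥ w₂) + (Real.sqrt (S j ⬝ᵥ (B j)⁻¹ *ᵥ S j)
          + (Real.sqrt (A j ⬝ᵥ (B j)⁻¹ *ᵥ A j)
            + Real.sqrt ((-w₁ + (-w₄ + -w₆)) ⬝ᵥ (B j)⁻¹ *ᵥ (-w₁ + (-w₄ + -w₆))))) := by
            gcongr
            exact aux_tri hPpsd _ _
      _ ≤ Real.sqrt (w₂ ⬝ᵥ (B j)⁻¹ *ᵥ w₂) + (Real.sqrt (S j ⬝ᵥ (B j)⁻¹ *ᵥ S j)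
          + (Real.sqrt (A j ⬝ᵥ (B j)⁻¹ *ᵥ A j)
            + (Real.sqrt ((-w₁) ⬝ᵥ (B j)⁻¹ *ᵥ (-w₁))
              + Real.sqrt ((-w₄ + -w₆) ⬝ᵥ (B j)⁻¹ *ᵥ (-w₄ + -w₆))))) := by
            gcongr
            exact aux_tri hPpsd _ _
      _ ≤ Real.sqrt (w₂ ⬝ᵥ (B j)⁻¹ *ᵥ w₂) + (Real.sqrt (S j ⬝ᵥ (B j)⁻¹ *ᵥ S j)
          + (Real.sqrt (A j ⬝ᵥ (B j)⁻¹ *ᵥ A j)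
            + (Real.sqrt ((-w₁) ⬝ᵥ (B j)⁻¹ *ᵥ (-w₁))
              + (Real.sqrt ((-w₄) ⬝ᵥ (B j)⁻¹ *ᵥ (-w₄))
                + Real.sqrt ((-w₆) ⬝ᵥ (B j)⁻¹ *ᵥ (-w₆)))))) := by
            gcongr
            exact aux_tri hPpsd _ _
      _ = C₁ + C₂ + C₃ + C₄ + C₅ + C₆ := by
            rw [hqneg, hqneg, hqneg, hC₁, hC₂, hC₃, hC₄, hC₅, hC₆]
            ring
  -- lower bound on quadratic forms of B k
  have hzz_nonneg : ∀ z : Fin d → ℝ, 0 ≤ z ⬝ᵥ z := fun z =>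
    Finset.sum_nonneg fun i _ => mul_self_nonneg _
  have hBk_lower : ∀ k (z : Fin d → ℝ), (lam * l k k) * (z ⬝ᵥ z) ≤ z ⬝ᵥ B k *ᵥ z := by
    intro k z
    rw [hB k, Matrix.add_mulVec, dotProduct_add, Matrix.smul_mulVec,
      Matrix.one_mulVec, dotProduct_smul]
    have h0 : 0 ≤ z ⬝ᵥ (∑ τ ∈ T k, (vecMulVec (X k τ) (X k τ) + E k τ)) *ᵥ z :=
      aux_dot_nonneg (hBpsd_part k) z
    rw [smul_eq_mul]
    linarith
  have hcinv : ∀ (c : ℝ), 0 < c → ((c • (1 : Matrix (Fin d) (Fin d) ℝ))⁻¹ = c⁻¹ • 1) := by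
    intro c hc
    apply Matrix.inv_eq_right_inv
    rw [smul_mul_smul_comm, one_mul, mul_inv_cancel₀ hc.ne', one_smul]
  have hQk : ∀ k (z : Fin d → ℝ), z ⬝ᵥ (B k)⁻¹ *ᵥ z ≤ (lam * l k k)⁻¹ * (z ⬝ᵥ z) := by
    intro k z
    have hmono := aux_inv_mono (aux_pd_smul_one (mul_pos hlam (hl k))) (hBpd k)
      (fun v => by
        rw [Matrix.smul_mulVec, Matrix.one_mulVec, dotProduct_smul, smul_eq_mul]
        exact hBk_lower k v) z
    rwa [hcinv _ (mul_pos hlam (hl k)), Matrix.smul_mulVec, Matrix.one_mulVec,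
      dotProduct_smul, smul_eq_mul] at hmono
  have hquad : ∀ z : Fin d → ℝ, z ⬝ᵥ Γ *ᵥ z ≤ z ⬝ᵥ (B j + B j) *ᵥ z := by
    intro z
    rw [hΓ, Matrix.add_mulVec, dotProduct_add, Matrix.add_mulVec, dotProduct_add]
    have h1 : z ⬝ᵥ (lam ^ 2 • ∑ k ∈ Finset.univ.erase j, (l j k) ^ 2 • (B k)⁻¹) *ᵥ z
        ≤ lam * l j j * (z ⬝ᵥ z) := by
      rw [Matrix.smul_mulVec, dotProduct_smul, smul_eq_mul, aux_sum_mulVec,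
        aux_dot_sum]
      have hsum1 : ∑ k ∈ Finset.univ.erase j, z ⬝ᵥ ((l j k) ^ 2 • (B k)⁻¹) *ᵥ z
          ≤ ∑ k ∈ Finset.univ.erase j, (l j k) ^ 2 * ((lam * l k k)⁻¹ * (z ⬝ᵥ z)) := by
        refine Finset.sum_le_sum fun k _ => ?_
        rw [Matrix.smul_mulVec, dotProduct_smul, smul_eq_mul]
        exact mul_le_mul_of_nonneg_left (hQk k z) (sq_nonneg _)
      have heq : lam ^ 2 * ∑ k ∈ Finset.univ.erase j, (l j k) ^ 2 * ((lam * l k k)⁻¹ * (z ⬝ᵥ z))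
          = (lam * l j j * (z ⬝ᵥ z)) * ∑ k ∈ Finset.univ.erase j, (l j k) ^ 2 / (l j j * l k k) := by
        rw [Finset.mul_sum, Finset.mul_sum]
        refine Finset.sum_congr rfl fun k _ => ?_
        have h1 : l k k ≠ 0 := (hl k).ne'
        have h2 : l j j ≠ 0 := (hl j).ne'
        have h3 : lam ≠ 0 := hlam.ne'
        field_simp
      have hlast : (lam * l j j * (z ⬝ᵥ z)) * ∑ k ∈ Finset.univ.erase j,
          (l j k) ^ 2 / (l j j * l k k) ≤ lam * l j j * (z ⬝ᵥ z) * 1 := by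
        exact mul_le_mul_of_nonneg_left hsum
          (mul_nonneg (mul_nonneg hlam.le (hl j).le) (hzz_nonneg z))
      calc lam ^ 2 * ∑ k ∈ Finset.univ.erase j, z ⬝ᵥ ((l j k) ^ 2 • (B k)⁻¹) *ᵥ z
          ≤ lam ^ 2 * ∑ k ∈ Finset.univ.erase j, (l j k) ^ 2 * ((lam * l k k)⁻¹ * (z ⬝ᵥ z)) := by
            refine mul_le_mul_of_nonneg_left hsum1 (sq_nonneg _)
        _ = (lam * l j j * (z ⬝ᵥ z)) * ∑ k ∈ Finset.univ.erase j,
              (l j k) ^ 2 / (l j j * l k k) := heq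
        _ ≤ lam * l j j * (z ⬝ᵥ z) * 1 := hlast
        _ = lam * l j j * (z ⬝ᵥ z) := mul_one _
    have h2 := hBk_lower j z
    linarith
  have hΓpd : Γ.PosDef := by
    rw [hΓ]
    exact (hBpd j).add_posSemidef
      (aux_psd_smul (aux_psd_sum fun k _ =>
        aux_psd_smul (hBpd k).inv.posSemidef (sq_nonneg _)) (sq_nonneg lam))
  have h2Bpd : (B j + B j).PosDef := (hBpd j).add (hBpd j)
  have hmono := aux_inv_mono hΓpd h2Bpd hquad x
  have hBB : (B j + B j)⁻¹ = (2:ℝ)⁻¹ • (B j)⁻¹ := by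
    apply Matrix.inv_eq_right_inv
    rw [Matrix.add_mul, Matrix.mul_smul, hBinv j, ← add_smul]
    norm_num
  rw [hBB, Matrix.smul_mulVec, dotProduct_smul, smul_eq_mul] at hmono
  have hxP : x ⬝ᵥ (B j)⁻¹ *ᵥ x ≤ 2 * (x ⬝ᵥ Γ⁻¹ *ᵥ x) := by linarith
  have hsqx : Real.sqrt (x ⬝ᵥ (B j)⁻¹ *ᵥ x)
      ≤ Real.sqrt 2 * Real.sqrt (x ⬝ᵥ Γ⁻¹ *ᵥ x) := by
    have := Real.sqrt_le_sqrt hxP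
    rwa [Real.sqrt_mul (by norm_num : (0:ℝ) ≤ 2)] at this
  have habs : |x ⬝ᵥ (muhat - μ j)| ≤
      Real.sqrt (x ⬝ᵥ (B j)⁻¹ *ᵥ x) * Real.sqrt (W ⬝ᵥ (B j)⁻¹ *ᵥ W) := by
    rw [hkey]
    exact aux_cs_abs hPpsd x W
  have hCnonneg : 0 ≤ C₁ + C₂ + C₃ + C₄ + C₅ + C₆ := by
    rw [hC₁, hC₂, hC₃, hC₄, hC₅, hC₆]
    positivity
  calc |x ⬝ᵥ (muhat - μ j)|
      ≤ Real.sqrt (x ⬝ᵥ (B j)⁻¹ *ᵥ x) * Real.sqrt (W ⬝ᵥ (B j)⁻¹ *ᵥ W) := habs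
    _ ≤ Real.sqrt 2 * Real.sqrt (x ⬝ᵥ Γ⁻¹.mulVec x) * (C₁ + C₂ + C₃ + C₄ + C₅ + C₆) := by
        refine mul_le_mul hsqx htriW (Real.sqrt_nonneg _) (by positivity)
end

section
/- Let d ≥ 1 and T ≥ 0 be integers and let λ > 0 and l > 0 be reals. Let X_1,…,X_T ∈ ℝ^d satisfy ‖X_t‖₂ ≤ 2 for all t, and let E_1,…,E_T ∈ ℝ^{d×d} be symmetric positive semidefinite matrices with trace(E_t) ≤ 4 for all t. Define B(1) = λ l I_d and B(t+1) = B(t) + X_t X_tᵀ + E_t for t = 1,…,T, and s_t = ‖X_t‖_{B(t)^{-1}}. Then Σ_{t=1}^T log(1 + s_t²) ≤ d log(1 + 8T/(d λ l)). -/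
open Matrix Finset

section Aux
variable {n : Type*} [Fintype n] [DecidableEq n]


lemma trace_eq_sum_eigs {A : Matrix n n ℝ} (hA : A.IsHermitian) :
    A.trace = ∑ i, hA.eigenvalues i := by
  conv_lhs => rw [hA.spectral_theorem, Unitary.conjStarAlgAut_apply]
  rw [Matrix.trace_mul_comm, ← Matrix.mul_assoc, Unitary.coe_star_mul_self, Matrix.one_mul,
    Matrix.trace_diagonal]
  simp

lemma one_le_det_one_add {M : Matrix n n ℝ} (hM : M.PosSemidef) :
    1 ≤ (1 + M).det := by
  have hkey : (1 : Matrix n n ℝ) + M =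
      (hM.1.eigenvectorUnitary : Matrix n n ℝ) *
        diagonal (fun i => 1 + hM.1.eigenvalues i) *
        (star hM.1.eigenvectorUnitary : Matrix n n ℝ) := by
    have h1 : diagonal (fun i => (1:ℝ) + hM.1.eigenvalues i) =
        1 + diagonal (RCLike.ofReal ∘ hM.1.eigenvalues) := by
      rw [← diagonal_one, ← diagonal_add]
      norm_num [Function.comp]
    have hUU : (hM.1.eigenvectorUnitary : Matrix n n ℝ) *
        star (hM.1.eigenvectorUnitary : Matrix n n ℝ) = 1 :=
      Matrix.mem_unitaryGroup_iff.mp hM.1.eigenvectorUnitary.2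
    rw [h1, Matrix.mul_add, Matrix.add_mul, Matrix.mul_one, hUU, ← Unitary.conjStarAlgAut_apply (S := ℝ), ← hM.1.spectral_theorem]
  rw [hkey, Matrix.det_mul, Matrix.det_mul, Matrix.det_diagonal]
  have hUU : star (hM.1.eigenvectorUnitary : Matrix n n ℝ) *
      (hM.1.eigenvectorUnitary : Matrix n n ℝ) = 1 :=
    Matrix.mem_unitaryGroup_iff'.mp hM.1.eigenvectorUnitary.2
  rw [mul_comm, ← mul_assoc, ← Matrix.det_mul, hUU, Matrix.det_one, one_mul]
  calc (1:ℝ) = ∏ _i : n, 1 := by simp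
    _ ≤ ∏ i : n, (1 + hM.1.eigenvalues i) :=
        Finset.prod_le_prod (fun i _ => zero_le_one)
          (fun i _ => by have := hM.eigenvalues_nonneg i; linarith)

open scoped MatrixOrder in
lemma det_le_det_add {A E : Matrix n n ℝ} (hA : A.PosDef) (hE : E.PosSemidef) :
    A.det ≤ (A + E).det := by
  set S := CFC.sqrt A with hSdef
  have hS : S.PosSemidef := (CFC.sqrt_nonneg A).posSemidef
  have hSS : S * S = A := CFC.sqrt_mul_sqrt_self A hA.posSemidef.nonneg
  have hdetS : S.det * S.det = A.det := by rw [← Matrix.det_mul, hSS]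
  have hdetSpos : 0 < S.det * S.det := hdetS ▸ hA.det_pos
  have hSunit : IsUnit S.det :=
    isUnit_iff_ne_zero.mpr fun h => by simp [h] at hdetSpos
  have hSH : S⁻¹ᴴ = S⁻¹ := by
    rw [Matrix.conjTranspose_nonsing_inv, hS.1.eq]
  have hM : (S⁻¹ * E * S⁻¹).PosSemidef := by
    have := hE.mul_mul_conjTranspose_same (S⁻¹)
    rwa [hSH] at this
  have hkey : A + E = S * (1 + S⁻¹ * E * S⁻¹) * S := by
    rw [Matrix.mul_add, Matrix.mul_one, Matrix.add_mul, hSS]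
    congr 1
    rw [Matrix.mul_assoc, Matrix.mul_assoc, Matrix.nonsing_inv_mul _ hSunit, Matrix.mul_one,
      ← Matrix.mul_assoc, Matrix.mul_nonsing_inv _ hSunit, Matrix.one_mul]
  calc A.det = A.det * 1 := (mul_one _).symm
    _ ≤ A.det * (1 + S⁻¹ * E * S⁻¹).det :=
        mul_le_mul_of_nonneg_left (one_le_det_one_add hM) hA.det_pos.le
    _ = (A + E).det := by
        rw [hkey, Matrix.det_mul, Matrix.det_mul, ← hdetS]; ring

lemma vecMulVec_posSemidef (x : n → ℝ) : (vecMulVec x x).PosSemidef := by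
  refine Matrix.PosSemidef.of_dotProduct_mulVec_nonneg ?_ ?_
  · ext i j; simp [vecMulVec_apply, Matrix.conjTranspose_apply, mul_comm]
  · intro y
    have : (vecMulVec x x) *ᵥ y = (x ⬝ᵥ y) • x := by
      ext i
      simp only [Matrix.mulVec, vecMulVec_apply, dotProduct, Pi.smul_apply, smul_eq_mul,
        Finset.sum_mul, Finset.mul_sum]
      exact Finset.sum_congr rfl fun j _ => by ring
    rw [this]
    simp only [star_trivial, dotProduct_smul, smul_eq_mul]
    rw [dotProduct_comm]
    exact mul_self_nonneg _

lemma det_add_vecMulVec {A : Matrix n n ℝ} (hA : IsUnit A.det) (x : n → ℝ) :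
    (A + vecMulVec x x).det = A.det * (1 + x ⬝ᵥ A⁻¹ *ᵥ x) := by
  rw [vecMulVec_eq Unit, Matrix.det_add_replicateCol_mul_replicateRow hA]
  congr 1
  rw [Matrix.det_unique]
  simp only [Matrix.add_apply, Matrix.one_apply_eq, Matrix.mul_apply, Matrix.replicateRow_apply,
    Matrix.replicateCol_apply, dotProduct, Matrix.mulVec, Finset.univ_unique, Finset.sum_mul,
    Finset.mul_sum]
  congr 1
  rw [Finset.sum_comm]
  exact Finset.sum_congr rfl fun i _ => Finset.sum_congr rfl fun j _ => by ring

end Aux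

/-- `Σ_t log(1 + s_t²) ≤ d log(1 + 8T/(dλl))` (0-indexed recursion). -/
theorem stmt_11 (d T : ℕ) (hd : 1 ≤ d) (lam l : ℝ) (hlam : 0 < lam) (hl : 0 < l)
    (X : ℕ → Fin d → ℝ) (hX : ∀ t, Real.sqrt (X t ⬝ᵥ X t) ≤ 2)
    (E : ℕ → Matrix (Fin d) (Fin d) ℝ) (hE : ∀ t, (E t).PosSemidef)
    (htr : ∀ t, (E t).trace ≤ 4)
    (B : ℕ → Matrix (Fin d) (Fin d) ℝ)
    (hB0 : B 0 = (lam * l) • (1 : Matrix (Fin d) (Fin d) ℝ))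
    (hBs : ∀ t, B (t + 1) = B t + vecMulVec (X t) (X t) + E t)
    (s : ℕ → ℝ) (hs : ∀ t, s t = Real.sqrt (X t ⬝ᵥ (B t)⁻¹.mulVec (X t))) :
    ∑ t ∈ Finset.range T, Real.log (1 + s t ^ 2) ≤
      (d : ℝ) * Real.log (1 + 8 * T / (d * lam * l)) := by
  
  have hdpos : (0:ℝ) < d := by exact_mod_cast hd
  have hll : (0:ℝ) < lam * l := mul_pos hlam hl
  -- positivity of B
  have hBpos : ∀ t, (B t).PosDef := by
    intro t
    induction t with
    | zero =>
      rw [hB0, Matrix.smul_one_eq_diagonal]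
      exact Matrix.PosDef.diagonal fun _ => hll
    | succ t ih =>
      rw [hBs t]
      exact (ih.add_posSemidef (vecMulVec_posSemidef (X t))).add_posSemidef (hE t)
  -- s t ^ 2
  have hs2 : ∀ t, s t ^ 2 = X t ⬝ᵥ (B t)⁻¹ *ᵥ X t := by
    intro t
    rw [hs t, Real.sq_sqrt]
    simpa using ((hBpos t).inv).posSemidef.dotProduct_mulVec_nonneg (X t)
  have hs2nn : ∀ t, 0 ≤ s t ^ 2 := fun t => sq_nonneg _
  -- determinant step
  have hstep : ∀ t, (B t).det * (1 + s t ^ 2) ≤ (B (t+1)).det := by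
    intro t
    have h1 : (B t + vecMulVec (X t) (X t)).det = (B t).det * (1 + s t ^ 2) := by
      rw [det_add_vecMulVec (hBpos t).det_pos.ne'.isUnit, hs2]
    rw [hBs t, ← h1]
    exact det_le_det_add ((hBpos t).add_posSemidef (vecMulVec_posSemidef (X t))) (hE t)
  -- log step
  have hlog : ∀ t, Real.log (1 + s t ^ 2) ≤
      Real.log ((B (t+1)).det) - Real.log ((B t).det) := by
    intro t
    have h0 : 0 < (B t).det := (hBpos t).det_pos
    have h1 : (0:ℝ) < 1 + s t ^ 2 := by nlinarith [hs2nn t]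
    rw [le_sub_iff_add_le, add_comm, ← Real.log_mul h0.ne' h1.ne']
    exact Real.log_le_log (by positivity) (hstep t)
  -- sum telescopes
  have hsum : ∑ t ∈ Finset.range T, Real.log (1 + s t ^ 2) ≤
      Real.log ((B T).det) - Real.log ((B 0).det) := by
    calc ∑ t ∈ Finset.range T, Real.log (1 + s t ^ 2)
        ≤ ∑ t ∈ Finset.range T,
            (Real.log ((B (t+1)).det) - Real.log ((B t).det)) :=
          Finset.sum_le_sum fun t _ => hlog t
      _ = Real.log ((B T).det) - Real.log ((B 0).det) :=
          Finset.sum_range_sub (fun t => Real.log ((B t).det)) T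
  -- trace bound
  have htrX : ∀ t, (vecMulVec (X t) (X t)).trace ≤ 4 := by
    intro t
    have hnn : 0 ≤ X t ⬝ᵥ X t := Finset.sum_nonneg fun i _ => mul_self_nonneg _
    have h4 : X t ⬝ᵥ X t ≤ 4 := by
      have := hX t
      nlinarith [Real.sq_sqrt hnn, Real.sqrt_nonneg (X t ⬝ᵥ X t)]
    calc (vecMulVec (X t) (X t)).trace = X t ⬝ᵥ X t := by
          simp [Matrix.trace, Matrix.diag, vecMulVec_apply, dotProduct]
      _ ≤ 4 := h4
  have htrace : ∀ t : ℕ, (B t).trace ≤ d * lam * l + 8 * t := by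
    intro t
    induction t with
    | zero =>
      rw [hB0]
      simp [Matrix.trace_smul, Matrix.trace_one]
      ring_nf
      nlinarith
    | succ t ih =>
      rw [hBs t, Matrix.trace_add, Matrix.trace_add]
      have := htrX t
      have := htr t
      push_cast
      linarith
  -- eigenvalue / Jensen bound for log det B T
  have hev := (hBpos T).isHermitian
  set ev : Fin d → ℝ := hev.eigenvalues with hevdef
  have hevpos : ∀ i, 0 < ev i := fun i => (hBpos T).eigenvalues_pos i
  have htreq : (B T).trace = ∑ i, ev i := trace_eq_sum_eigs hev
  have hdet_eq : Real.log ((B T).det) = ∑ i, Real.log (ev i) := by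
    rw [hev.det_eq_prod_eigenvalues,
      Real.log_prod (fun i _ => by exact_mod_cast (hevpos i).ne')]
    norm_num
    rfl
  have hjensen : Real.log ((B T).det) ≤ d * Real.log ((B T).trace / d) := by
    have hcc : ConcaveOn ℝ (Set.Ioi 0) Real.log := strictConcaveOn_log_Ioi.concaveOn
    have h := hcc.le_map_sum (t := Finset.univ) (w := fun _ : Fin d => 1 / (d:ℝ))
      (p := ev) (fun i _ => by positivity)
      (by simp [Finset.card_univ]; field_simp)
      (fun i _ => hevpos i)
    simp only [smul_eq_mul] at h
    have h2 : ∑ i, (1/(d:ℝ)) * ev i = (B T).trace / d := by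
      rw [htreq, ← Finset.mul_sum]; ring
    rw [h2] at h
    have h3 : ∑ i, (1/(d:ℝ)) * Real.log (ev i) =
        (1/(d:ℝ)) * Real.log ((B T).det) := by
      rw [hdet_eq, ← Finset.mul_sum]
    rw [h3] at h
    calc Real.log ((B T).det) = d * ((1/(d:ℝ)) * Real.log ((B T).det)) := by
          field_simp
      _ ≤ d * Real.log ((B T).trace / d) :=
          mul_le_mul_of_nonneg_left h hdpos.le
  have htrpos : 0 < (B T).trace := by
    rw [htreq]
    exact Finset.sum_pos (fun i _ => hevpos i)
      (Finset.univ_nonempty_iff.mpr ⟨⟨0, hd⟩⟩)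
  have hmono : Real.log ((B T).trace / d) ≤
      Real.log ((d * lam * l + 8 * T) / d) := by
    apply Real.log_le_log (by positivity)
    gcongr
    exact htrace T
  -- log of det B 0
  have hdet0 : Real.log ((B 0).det) = d * Real.log (lam * l) := by
    rw [hB0, Matrix.det_smul, Matrix.det_one, mul_one]
    simp [Real.log_pow, Fintype.card_fin]
  -- combine
  have hfinal : (d:ℝ) * Real.log ((d * lam * l + 8 * T) / d) - d * Real.log (lam * l)
      = d * Real.log (1 + 8 * T / (d * lam * l)) := by
    have harg : (↑d * lam * l + 8 * ↑T) / ↑d / (lam * l)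
        = 1 + 8 * ↑T / (↑d * lam * l) := by
      field_simp
      try ring_nf
      try tauto
    rw [← mul_sub, ← Real.log_div (by positivity) hll.ne', harg]
  calc ∑ t ∈ Finset.range T, Real.log (1 + s t ^ 2)
      ≤ Real.log ((B T).det) - Real.log ((B 0).det) := hsum
    _ ≤ (d:ℝ) * Real.log ((d * lam * l + 8 * T) / d) - d * Real.log (lam * l) := by
        rw [hdet0]
        have := hjensen.trans (mul_le_mul_of_nonneg_left hmono hdpos.le)
        linarith
    _ = (d:ℝ) * Real.log (1 + 8 * T / (d * lam * l)) := hfinal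
end
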